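/- Let m ≥ 4 be even and 𝔷 ∈ ℍ. If z = x+iy ∈ ℍ satisfies y > Im(M𝔷) for all M ∈ SL₂(ℤ), then H_m(𝔷,z) = 2πi Σ_{n≥0} Σ_{c,d∈ℤ, gcd(c,d)=1} (c𝔷+d)^{−m} e^{2πn𝔷₂/|c𝔷+d|²} e(−n(ac|𝔷|² + bd + 𝔷₁(ad+bc))/|c𝔷+d|²) q^n, where for each coprime pair (c,d), a,b ∈ ℤ are any integers with ad−bc = 1 (the summand is independent of this choice). -/

import Mathlib

open Complex Real Filter Topology

namespace RamanujanMero

noncomputable section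

/-- `ρ = e^{πi/3}`. -/
def rho : ℂ := Complex.exp ((π : ℂ) * Complex.I / 3)

/-- `e(t) = e^{2πit}` for real `t`. -/
def eR (t : ℝ) : ℂ := Complex.exp (2 * (π : ℂ) * Complex.I * (t : ℂ))

/-- `q = e^{2πiz}`. -/
def qexp (z : ℂ) : ℂ := Complex.exp (2 * (π : ℂ) * Complex.I * z)

-- A chosen completion `(a,b)` of `(c,d)` to a unimodular pair: `a*d - b*c = 1`.
open scoped Classical in
def completion (c d : ℤ) : ℤ × ℤ :=
  if h : ∃ p : ℤ × ℤ, p.1 * d - p.2 * c = 1 then h.choose else (0, 0)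

/-- The Möbius image `M𝔷 = (a𝔷+b)/(c𝔷+d)` for the coset of `Γ∞\SL₂(ℤ)` with
bottom row `(c,d)`, using the chosen completion. -/
def moeb (c d : ℤ) (𝔷 : ℂ) : ℂ :=
  (((completion c d).1 : ℂ) * 𝔷 + ((completion c d).2 : ℂ)) / ((c : ℂ) * 𝔷 + (d : ℂ))

/-- Coprime pairs of integers, parametrizing `Γ∞\SL₂(ℤ)` by bottom rows. -/
def CoprimePair : Type := {p : ℤ × ℤ // IsCoprime p.1 p.2}

/-- The Poincaré series `H_{m,ℓ}(𝔷,z)`. -/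
def Hml (m ℓ : ℕ) (𝔷 z : ℂ) : ℂ :=
  2 * (π : ℂ) * Complex.I *
    ∑' p : CoprimePair,
      ((((moeb p.1.1 p.1.2 𝔷).im ^ ℓ)⁻¹ : ℝ) : ℂ) *
        (((p.1.1 : ℂ) * 𝔷 + (p.1.2 : ℂ)) ^ m)⁻¹ *
        (1 - Complex.exp (2 * (π : ℂ) * Complex.I * (z - moeb p.1.1 p.1.2 𝔷)))⁻¹

/-- `H^{(r)}_{m,ℓ}(𝔷,z) = ∂^r/∂z^r H_{m,ℓ}(𝔷,z)`. -/
def Hder (m ℓ r : ℕ) (𝔷 z : ℂ) : ℂ := iteratedDeriv r (Hml m ℓ 𝔷) z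

/-- The differential operator `∂/∂X_𝔷(α) = ((α-𝔷̄)²/(2i𝔷₂)) ∂/∂α`. -/
def Xderiv (𝔷 : ℂ) (f : ℂ → ℂ) : ℂ → ℂ :=
  fun α => ((α - (starRingEnd ℂ) 𝔷) ^ 2 / (2 * Complex.I * (𝔷.im : ℂ))) * deriv f α

/-- `Y_{2−m,ν}(𝔷,z)` for `ν ∈ -ℕ`. -/
def Yser (m : ℕ) (ν : ℤ) (𝔷 z : ℂ) : ℂ :=
  ((((-ν - 1).toNat.factorial : ℕ) : ℂ))⁻¹ *
    ((Xderiv 𝔷)^[(-ν - 1).toNat]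
      (fun α => (α - (starRingEnd ℂ) 𝔷) ^ m * Hml m 0 α z)) 𝔷

/-- `B_{m,c,d}(𝔷,n)`. -/
def Bcd (m : ℕ) (c d : ℤ) (𝔷 : ℂ) (n : ℕ) : ℂ :=
  (((c : ℂ) * 𝔷 + (d : ℂ)) ^ m)⁻¹ *
    ((Real.exp (2 * π * n * 𝔷.im / Complex.normSq ((c : ℂ) * 𝔷 + (d : ℂ))) : ℝ) : ℂ) *
    eR (-(n * ((((completion c d).1 * c : ℤ) : ℝ) * Complex.normSq 𝔷 +
        (((completion c d).2 * d : ℤ) : ℝ) +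
        𝔷.re * (((completion c d).1 * d + (completion c d).2 * c : ℤ) : ℝ)) /
          Complex.normSq ((c : ℂ) * 𝔷 + (d : ℂ))))

/-- The ring of integers `ℤ[𝔷]` of `ℚ(𝔷)`, as a subring of `ℂ` (for `𝔷 ∈ {i, ρ}`). -/
def ringOf (𝔷 : ℂ) : Subring ℂ := Subring.closure {𝔷}

/-- `𝔷` as an element of `ℤ[𝔷]`. -/
def zel (𝔷 : ℂ) : ringOf 𝔷 := ⟨𝔷, Subring.subset_closure (Set.mem_singleton 𝔷)⟩

/-- The norm of an ideal. -/
def inorm (𝔷 : ℂ) (b : Ideal (ringOf 𝔷)) : ℕ := Nat.card (↥(ringOf 𝔷) ⧸ b)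

/-- An ideal is primitive if it is not divisible by (i.e. contained in) any ideal `(g)`
with `g ∈ ℤ`, `g ≥ 2`. -/
def IsPrimitiveIdeal {R : Type*} [CommRing R] (b : Ideal R) : Prop :=
  ∀ g : ℤ, 2 ≤ g → ¬ b ≤ Ideal.span {(g : R)}

/-- Nonzero primitive ideals of `ℤ[𝔷]`. -/
def PrimIdeal (𝔷 : ℂ) : Type := {b : Ideal (ringOf 𝔷) // b ≠ ⊥ ∧ IsPrimitiveIdeal b}

-- A chosen coprime pair `(c,d)` with `b = (c𝔷 + d)`.
open scoped Classical in
def genPair (𝔷 : ℂ) (b : Ideal (ringOf 𝔷)) : ℤ × ℤ :=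
  if h : ∃ p : ℤ × ℤ, IsCoprime p.1 p.2 ∧
      b = Ideal.span {(p.1 : ringOf 𝔷) * zel 𝔷 + (p.2 : ringOf 𝔷)} then h.choose else (1, 0)

/-- `ω_𝔷`, the order of the stabilizer of `𝔷` in `PSL₂(ℤ)` (for `𝔷 ∈ {i, ρ}`). -/
def omegaZ (𝔷 : ℂ) : ℕ := if 𝔷 = Complex.I then 2 else 3

/-- `C_k(b,n)`, for a primitive ideal `b` of `ℤ[i]` (if `𝔷 = i`) resp. `ℤ[ρ]`. -/
def Cfun (𝔷 : ℂ) (k : ℕ) (b : Ideal (ringOf 𝔷)) (n : ℕ) : ℝ :=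
  let c : ℤ := (genPair 𝔷 b).1
  let d : ℤ := (genPair 𝔷 b).2
  let a : ℤ := (completion c d).1
  let b' : ℤ := (completion c d).2
  if 𝔷 = Complex.I then
    Real.cos (2 * π * n * ((a * c + b' * d : ℤ) : ℝ) / (inorm 𝔷 b) +
      k * Real.arctan ((c : ℝ) / (d : ℝ)))
  else
    (-1 : ℝ) ^ n *
      Real.cos (π * n * ((a * d + b' * c - 2 * a * c - 2 * b' * d : ℤ) : ℝ) / (inorm 𝔷 b) +
        π * n - k * Real.arctan ((c : ℝ) * Real.sqrt 3 / (2 * (d : ℝ) - (c : ℝ))))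

/-- The series `F_{k,ℓ,r}(𝔷;q)`. -/
def Fser (k ℓ r : ℕ) (𝔷 z : ℂ) : ℂ :=
  ∑' n : ℕ,
    (∑' b : PrimIdeal 𝔷,
      ((Cfun 𝔷 k b.1 n * (inorm 𝔷 b.1 : ℝ) ^ ((ℓ : ℝ) - (k : ℝ) / 2) * (n : ℝ) ^ r *
        Real.exp (2 * π * n * 𝔷.im / (inorm 𝔷 b.1)) : ℝ) : ℂ)) * qexp z ^ n

/-- The quasimodular Eisenstein series `E₂`. -/
def E2 (z : ℂ) : ℂ :=
  1 - 24 * ∑' n : ℕ, ((ArithmeticFunction.sigma 1 (n + 1) : ℕ) : ℂ) * qexp z ^ (n + 1)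

/-- The Eisenstein series `E₄`. -/
def E4 (z : ℂ) : ℂ :=
  1 + 240 * ∑' n : ℕ, ((ArithmeticFunction.sigma 3 (n + 1) : ℕ) : ℂ) * qexp z ^ (n + 1)

/-- The Eisenstein series `E₆`. -/
def E6 (z : ℂ) : ℂ :=
  1 - 504 * ∑' n : ℕ, ((ArithmeticFunction.sigma 5 (n + 1) : ℕ) : ℂ) * qexp z ^ (n + 1)

/-- The modular completion `Ê₂` of `E₂`. -/
def E2hat (z : ℂ) : ℂ := E2 z - 3 / ((π : ℂ) * (z.im : ℂ))

/-- The discriminant function `Δ`. -/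
def Δfun (z : ℂ) : ℂ := (E4 z ^ 3 - E6 z ^ 2) / 1728

/-- The `j`-invariant. -/
def jfun (z : ℂ) : ℂ := E4 z ^ 3 / Δfun z

/-- `SL₂(ℤ)`. -/
abbrev SL2Z := Matrix.SpecialLinearGroup (Fin 2) ℤ

/-- The Möbius action of `SL₂(ℤ)` on `ℂ` (partial; used on the upper half-plane). -/
def act (M : SL2Z) (z : ℂ) : ℂ :=
  (((M.1 0 0 : ℤ) : ℂ) * z + ((M.1 0 1 : ℤ) : ℂ)) /
    (((M.1 1 0 : ℤ) : ℂ) * z + ((M.1 1 1 : ℤ) : ℂ))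

/-- A meromorphic modular form of weight `κ` for `SL₂(ℤ)`, holomorphic at `i∞`,
whose only poles modulo `SL₂(ℤ)` are at `z = 𝔷` and have order at most `ν`. -/
structure IsMeroModularPoles (κ : ℤ) (𝔷 : ℂ) (ν : ℕ) (F : ℂ → ℂ) : Prop where
  transform : ∀ M : SL2Z, ∀ z : ℂ, 0 < z.im →
    F (act M z) = (((M.1 1 0 : ℤ) : ℂ) * z + ((M.1 1 1 : ℤ) : ℂ)) ^ κ * F z
  holo : ∀ z : ℂ, 0 < z.im → (∀ M : SL2Z, z ≠ act M 𝔷) → AnalyticAt ℂ F z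
  pole : ∀ z : ℂ, 0 < z.im → (∃ M : SL2Z, z = act M 𝔷) →
    ∃ g : ℂ → ℂ, AnalyticAt ℂ g z ∧ ∀ᶠ w in nhdsWithin z {z}ᶜ, F w = g w / (w - z) ^ ν
  bounded_at_inf : ∃ C Y : ℝ, ∀ z : ℂ, Y < z.im → ‖F z‖ ≤ C

/-- A meromorphic cusp form of weight `m` for `SL₂(ℤ)` whose only poles modulo
`SL₂(ℤ)` are at the point `z₀` and have order at most `ν`. -/
structure IsMeroCuspFormPoles (m : ℕ) (z₀ : ℂ) (ν : ℕ) (G : ℂ → ℂ) : Prop where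
  transform : ∀ M : SL2Z, ∀ z : ℂ, 0 < z.im →
    G (act M z) = (((M.1 1 0 : ℤ) : ℂ) * z + ((M.1 1 1 : ℤ) : ℂ)) ^ m * G z
  holo : ∀ z : ℂ, 0 < z.im → (∀ M : SL2Z, z ≠ act M z₀) → AnalyticAt ℂ G z
  pole : ∀ z : ℂ, 0 < z.im → (∃ M : SL2Z, z = act M z₀) →
    ∃ g : ℂ → ℂ, AnalyticAt ℂ g z ∧ ∀ᶠ w in nhdsWithin z {z}ᶜ, G w = g w / (w - z) ^ ν
  zero_at_inf : Tendsto G (comap Complex.im atTop) (nhds 0)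

/-- A holomorphic cusp form of weight `m` for `SL₂(ℤ)`. -/
structure IsCuspForm (m : ℕ) (f : ℂ → ℂ) : Prop where
  holo : ∀ z : ℂ, 0 < z.im → AnalyticAt ℂ f z
  transform : ∀ M : SL2Z, ∀ z : ℂ, 0 < z.im →
    f (act M z) = (((M.1 1 0 : ℤ) : ℂ) * z + ((M.1 1 1 : ℤ) : ℂ)) ^ m * f z
  zero_at_inf : Tendsto f (comap Complex.im atTop) (nhds 0)

/-- `𝓕^{(r)}_{m,ℓ}(𝔷,z)`. -/
def Fcal (m ℓ r : ℕ) (𝔷 z : ℂ) : ℂ :=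
  ∑ j ∈ Finset.range (ℓ + 1),
    ((ℓ.choose j : ℕ) : ℂ) * (3 / (π : ℂ)) ^ (ℓ - j) * E2hat 𝔷 ^ j * Hder (m - 2 * j) (ℓ - j) r 𝔷 z


-- === auxiliary defs ===

def Lf (𝔷 : ℂ) (p : CoprimePair) : ℂ := (p.1.1 : ℂ) * 𝔷 + (p.1.2 : ℂ)

def muf (𝔷 : ℂ) (p : CoprimePair) : ℂ := moeb p.1.1 p.1.2 𝔷

def wf (𝔷 z : ℂ) (p : CoprimePair) : ℂ :=
  Complex.exp (2 * (π : ℂ) * Complex.I * (z - muf 𝔷 p))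

def Xf (𝔷 : ℂ) (p : CoprimePair) : ℝ :=
  (((completion p.1.1 p.1.2).1 * p.1.1 : ℤ) : ℝ) * Complex.normSq 𝔷 +
    (((completion p.1.1 p.1.2).2 * p.1.2 : ℤ) : ℝ) +
    𝔷.re * (((completion p.1.1 p.1.2).1 * p.1.2 + (completion p.1.1 p.1.2).2 * p.1.1 : ℤ) : ℝ)

def Nf (𝔷 : ℂ) (p : CoprimePair) : ℝ := Complex.normSq (Lf 𝔷 p)

def vecf (p : CoprimePair) : Fin 2 → ℤ := ![p.1.1, p.1.2]

-- === auxiliary lemmas ===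

lemma completion_spec {c d : ℤ} (h : IsCoprime c d) :
    (completion c d).1 * d - (completion c d).2 * c = 1 := by
  obtain ⟨u, v, huv⟩ := h
  have hex : ∃ p : ℤ × ℤ, p.1 * d - p.2 * c = 1 := ⟨(v, -u), by dsimp only; linarith⟩
  rw [completion, dif_pos hex]
  exact hex.choose_spec

lemma mul_conj_eq (a b c d : ℤ) (h : a * d - b * c = 1) (𝔷 : ℂ) :
    ((a:ℂ) * 𝔷 + (b:ℂ)) * (starRingEnd ℂ) ((c:ℂ) * 𝔷 + (d:ℂ)) =
      ((((a*c:ℤ):ℝ) * Complex.normSq 𝔷 + ((b*d:ℤ):ℝ) + 𝔷.re * ((a*d+b*c:ℤ):ℝ) : ℝ) : ℂ)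
        + (𝔷.im : ℂ) * Complex.I := by
  have hC : (a:ℝ) * d - (b:ℝ) * c = 1 := by exact_mod_cast h
  apply Complex.ext
  · simp only [Complex.normSq_apply, Complex.mul_re, Complex.mul_im, Complex.add_re,
      Complex.add_im, Complex.ofReal_re, Complex.ofReal_im, Complex.intCast_re,
      Complex.intCast_im, Complex.I_re, Complex.I_im, Complex.conj_re, Complex.conj_im,
      map_add, map_mul]
    push_cast
    ring
  · simp only [Complex.normSq_apply, Complex.mul_re, Complex.mul_im, Complex.add_re,
      Complex.add_im, Complex.ofReal_re, Complex.ofReal_im, Complex.intCast_re,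
      Complex.intCast_im, Complex.I_re, Complex.I_im, Complex.conj_re, Complex.conj_im,
      map_add, map_mul]
    linear_combination 𝔷.im * hC

lemma div_eq_aux (a b c d : ℤ) (h : a * d - b * c = 1) (𝔷 : ℂ)
    (hne : (c:ℂ) * 𝔷 + (d:ℂ) ≠ 0) :
    ((a:ℂ) * 𝔷 + (b:ℂ)) / ((c:ℂ) * 𝔷 + (d:ℂ)) =
      (((((a*c:ℤ):ℝ) * Complex.normSq 𝔷 + ((b*d:ℤ):ℝ) + 𝔷.re * ((a*d+b*c:ℤ):ℝ)) /
          Complex.normSq ((c:ℂ) * 𝔷 + (d:ℂ)) : ℝ) : ℂ)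
        + ((𝔷.im / Complex.normSq ((c:ℂ) * 𝔷 + (d:ℂ)) : ℝ) : ℂ) * Complex.I := by
  have hconj : (starRingEnd ℂ) ((c:ℂ) * 𝔷 + (d:ℂ)) ≠ 0 := by
    simpa only [ne_eq, map_eq_zero] using hne
  have h1 : ((a:ℂ) * 𝔷 + (b:ℂ)) / ((c:ℂ) * 𝔷 + (d:ℂ)) =
      (((a:ℂ) * 𝔷 + (b:ℂ)) * (starRingEnd ℂ) ((c:ℂ) * 𝔷 + (d:ℂ))) /
        (((c:ℂ) * 𝔷 + (d:ℂ)) * (starRingEnd ℂ) ((c:ℂ) * 𝔷 + (d:ℂ))) := by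
    rw [mul_div_mul_right _ _ hconj]
  have hN : (Complex.normSq ((c:ℂ) * 𝔷 + (d:ℂ)) : ℝ) ≠ 0 := by
    simpa [Complex.normSq_eq_zero] using hne
  rw [h1, Complex.mul_conj, mul_conj_eq a b c d h 𝔷]
  push_cast
  field_simp

lemma vecf_ne_zero (p : CoprimePair) : vecf p ≠ 0 := by
  intro hp
  have h0 : p.1.1 = 0 := by simpa [vecf] using congrFun hp 0
  have h1 : p.1.2 = 0 := by simpa [vecf] using congrFun hp 1
  have h2 := p.2
  rw [h0, h1] at h2
  exact not_isCoprime_zero_zero h2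

lemma one_le_norm_vecf (p : CoprimePair) : (1:ℝ) ≤ ‖vecf p‖ := by
  rw [EisensteinSeries.norm_eq_max_natAbs]
  have h : 1 ≤ max (vecf p 0).natAbs (vecf p 1).natAbs := by
    rcases Nat.eq_zero_or_pos (max (vecf p 0).natAbs (vecf p 1).natAbs) with h | h
    · exfalso
      apply vecf_ne_zero p
      funext i
      fin_cases i <;>
        simp_all [Nat.max_eq_zero_iff, Int.natAbs_eq_zero]
    · exact h
  exact_mod_cast h

lemma det_completion (p : CoprimePair) :
    (completion p.1.1 p.1.2).1 * p.1.2 - (completion p.1.1 p.1.2).2 * p.1.1 = 1 :=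
  completion_spec p.2

section withz
variable {𝔷 : ℂ} (h𝔷 : 0 < 𝔷.im)
include h𝔷

lemma r_le_abs_Lf (p : CoprimePair) :
    EisensteinSeries.r ⟨𝔷, h𝔷⟩ ≤ ‖Lf 𝔷 p‖ := by
  have h := EisensteinSeries.r_mul_max_le (z := ⟨𝔷, h𝔷⟩) (vecf_ne_zero p)
  have h2 : ‖(vecf p 0 : ℂ) * ((⟨𝔷, h𝔷⟩ : UpperHalfPlane) : ℂ) + (vecf p 1 : ℂ)‖ =
      ‖Lf 𝔷 p‖ := by
    simp [vecf, Lf]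
  calc EisensteinSeries.r ⟨𝔷, h𝔷⟩
      ≤ EisensteinSeries.r ⟨𝔷, h𝔷⟩ * ‖vecf p‖ :=
        le_mul_of_one_le_right (EisensteinSeries.r_pos _).le (one_le_norm_vecf p)
    _ ≤ _ := by rw [← h2]; exact h

lemma Lf_ne_zero (p : CoprimePair) : Lf 𝔷 p ≠ 0 := by
  have := lt_of_lt_of_le (EisensteinSeries.r_pos ⟨𝔷, h𝔷⟩) (r_le_abs_Lf h𝔷 p)
  intro h0
  rw [h0] at this
  simp at this

lemma Nf_pos (p : CoprimePair) : 0 < Nf 𝔷 p :=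
  Complex.normSq_pos.mpr (Lf_ne_zero h𝔷 p)

lemma muf_eq (p : CoprimePair) :
    muf 𝔷 p = ((Xf 𝔷 p / Nf 𝔷 p : ℝ) : ℂ) + ((𝔷.im / Nf 𝔷 p : ℝ) : ℂ) * Complex.I := by
  have := div_eq_aux (completion p.1.1 p.1.2).1 (completion p.1.1 p.1.2).2 p.1.1 p.1.2
    (det_completion p) 𝔷 (Lf_ne_zero h𝔷 p)
  simpa [muf, moeb, Xf, Nf, Lf] using this

lemma muf_im (p : CoprimePair) : (muf 𝔷 p).im = 𝔷.im / Nf 𝔷 p := by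
  rw [muf_eq h𝔷 p]
  simp

lemma exists_act_eq (p : CoprimePair) : ∃ M : SL2Z, act M 𝔷 = muf 𝔷 p := by
  refine ⟨⟨!![(completion p.1.1 p.1.2).1, (completion p.1.1 p.1.2).2; p.1.1, p.1.2], ?_⟩, ?_⟩
  · rw [Matrix.det_fin_two_of]
    have := det_completion p
    linarith
  · simp [act, muf, moeb]

lemma summable_norm_inv_pow {m : ℕ} (hm : 4 ≤ m) :
    Summable fun p : CoprimePair => ‖(Lf 𝔷 p ^ m)⁻¹‖ := by
  have hm2 : (2:ℝ) < (m:ℝ) := by exact_mod_cast (by omega : 2 < m)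
  have hsum1 : Summable (fun x : Fin 2 → ℤ =>
      EisensteinSeries.r ⟨𝔷, h𝔷⟩ ^ (-(m:ℝ)) * ‖x‖ ^ (-(m:ℝ))) :=
    (EisensteinSeries.summable_one_div_norm_rpow hm2).mul_left _
  have hvecinj : Function.Injective vecf := by
    intro p q h
    apply Subtype.ext
    have h0 : p.1.1 = q.1.1 := by simpa [vecf] using congrFun h 0
    have h1 : p.1.2 = q.1.2 := by simpa [vecf] using congrFun h 1
    exact Prod.ext h0 h1
  have hsum2 := hsum1.comp_injective hvecinj
  apply Summable.of_nonneg_of_le (fun p => norm_nonneg _) _ hsum2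
  intro p
  refine le_trans (le_of_eq ?_)
    (EisensteinSeries.summand_bound ⟨𝔷, h𝔷⟩ (by positivity : (0:ℝ) ≤ (m:ℝ)) (vecf p))
  have h3 : ‖(Lf 𝔷 p ^ m)⁻¹‖ = ‖Lf 𝔷 p‖ ^ (-(m:ℝ)) := by
    rw [norm_inv, norm_pow, ← Real.rpow_natCast, ← Real.rpow_neg
      (norm_nonneg _)]
  rw [h3]
  congr 2

/-- Existence of `p₀` minimizing `|c𝔷+d|`. -/
lemma exists_min_abs_Lf :
    ∃ p₀ : CoprimePair, ∀ p : CoprimePair, ‖Lf 𝔷 p₀‖ ≤ ‖Lf 𝔷 p‖ := by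
  classical
  set r := EisensteinSeries.r ⟨𝔷, h𝔷⟩ with hr
  have hrpos : 0 < r := EisensteinSeries.r_pos _
  have hp₁cop : IsCoprime ((0,1) : ℤ × ℤ).1 ((0,1) : ℤ × ℤ).2 := isCoprime_zero_left.mpr isUnit_one
  let p₁ : CoprimePair := ⟨(0,1), hp₁cop⟩
  have hLp₁ : ‖Lf 𝔷 p₁‖ = 1 := by simp [Lf, p₁]
  set S : Set CoprimePair := {p | ‖Lf 𝔷 p‖ ≤ 1} with hS
  have hS1 : p₁ ∈ S := by simp [S, hLp₁]
  have hSfin : S.Finite := by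
    set K : ℕ := ⌈r⁻¹⌉₊ with hK
    apply Set.Finite.subset (Set.Finite.preimage
      (Set.injOn_of_injective (fun (p q : CoprimePair) (hpq : p.1 = q.1) => Subtype.ext hpq))
      (Set.finite_Icc ((-(K:ℤ), -(K:ℤ))) (((K:ℤ), (K:ℤ)))))
    intro p hp
    have hp' : ‖Lf 𝔷 p‖ ≤ 1 := hp
    have hb : r * ‖vecf p‖ ≤ 1 := by
      refine le_trans (le_of_le_of_eq (EisensteinSeries.r_mul_max_le (z := ⟨𝔷, h𝔷⟩)
        (vecf_ne_zero p)) ?_) hp'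
      simp [vecf, Lf]
    have hnorm : ‖vecf p‖ ≤ r⁻¹ := by
      rw [inv_eq_one_div, le_div_iff₀ hrpos]
      linarith
    have hc : ∀ i : Fin 2, (vecf p i).natAbs ≤ K := by
      intro i
      have h1 : ((vecf p i).natAbs : ℝ) ≤ ‖vecf p‖ := by
        rw [EisensteinSeries.norm_eq_max_natAbs]
        have h2 : (vecf p i).natAbs ≤ max (vecf p 0).natAbs (vecf p 1).natAbs := by
          fin_cases i
          exacts [le_max_left _ _, le_max_right _ _]
        exact_mod_cast h2
      exact_mod_cast h1.trans (hnorm.trans (Nat.le_ceil _))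
    have hc0 : (p.1.1).natAbs ≤ K := by simpa [vecf] using hc 0
    have hc1 : (p.1.2).natAbs ≤ K := by simpa [vecf] using hc 1
    show ((-(K:ℤ)) ≤ p.1.1 ∧ (-(K:ℤ)) ≤ p.1.2) ∧ (p.1.1 ≤ (K:ℤ) ∧ p.1.2 ≤ (K:ℤ))
    refine ⟨⟨?_, ?_⟩, ?_, ?_⟩ <;> omega
  obtain ⟨p₀, _, hp₀min⟩ := Set.exists_min_image S (fun p => ‖Lf 𝔷 p‖) hSfin ⟨p₁, hS1⟩
  refine ⟨p₀, fun p => ?_⟩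
  by_cases hp : p ∈ S
  · exact hp₀min p hp
  · have h1 : (1:ℝ) < ‖Lf 𝔷 p‖ := by
      simp only [hS, Set.mem_setOf_eq, not_le] at hp
      exact hp
    calc ‖Lf 𝔷 p₀‖ ≤ ‖Lf 𝔷 p₁‖ := hp₀min p₁ hS1
      _ = 1 := hLp₁
      _ ≤ _ := h1.le

lemma term_key {m : ℕ} (z : ℂ) (p : CoprimePair) (n : ℕ) :
    (Lf 𝔷 p ^ m)⁻¹ * wf 𝔷 z p ^ n =
      (Lf 𝔷 p ^ m)⁻¹ *
        ((Real.exp (2 * π * n * 𝔷.im / Complex.normSq (Lf 𝔷 p)) : ℝ) : ℂ) *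
        eR (-(n * Xf 𝔷 p / Nf 𝔷 p)) * qexp z ^ n := by
  have hw : wf 𝔷 z p ^ n =
      ((Real.exp (2 * π * n * 𝔷.im / Complex.normSq (Lf 𝔷 p)) : ℝ) : ℂ) *
        (eR (-(n * Xf 𝔷 p / Nf 𝔷 p)) * qexp z ^ n) := by
    rw [wf, ← Complex.exp_nat_mul, Complex.ofReal_exp, eR, qexp, ← Complex.exp_nat_mul,
      ← Complex.exp_add, ← Complex.exp_add]
    congr 1
    rw [muf_eq h𝔷 p]
    have hNf : Complex.normSq (Lf 𝔷 p) = Nf 𝔷 p := rfl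
    rw [hNf]
    push_cast
    linear_combination (-(2*(π:ℂ)*(n:ℂ)*(𝔷.im:ℂ)/((Nf 𝔷 p : ℝ):ℂ))) * Complex.I_sq
  rw [hw]
  ring

end withz

set_option maxHeartbeats 1000000 in
/-- Fourier expansion of `H_m(𝔷,z)` as a sum over coprime pairs. -/
theorem H_Fourier_coprime (m : ℕ) (hm : 4 ≤ m) (hme : Even m)
    (𝔷 : ℂ) (h𝔷 : 0 < 𝔷.im) (z : ℂ) (hz : 0 < z.im)
    (hy : ∀ M : SL2Z, (act M 𝔷).im < z.im) :
    Hml m 0 𝔷 z = 2 * (π : ℂ) * Complex.I *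
      ∑' n : ℕ, (∑' p : CoprimePair,
        (((p.1.1 : ℂ) * 𝔷 + (p.1.2 : ℂ)) ^ m)⁻¹ *
          ((Real.exp (2 * π * n * 𝔷.im / Complex.normSq ((p.1.1 : ℂ) * 𝔷 + (p.1.2 : ℂ))) : ℝ) : ℂ) *
          eR (-(n * ((((completion p.1.1 p.1.2).1 * p.1.1 : ℤ) : ℝ) * Complex.normSq 𝔷 +
              (((completion p.1.1 p.1.2).2 * p.1.2 : ℤ) : ℝ) +
              𝔷.re * (((completion p.1.1 p.1.2).1 * p.1.2 +
                (completion p.1.1 p.1.2).2 * p.1.1 : ℤ) : ℝ)) /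
            Complex.normSq ((p.1.1 : ℂ) * 𝔷 + (p.1.2 : ℂ))))) * qexp z ^ n := by
  classical
  obtain ⟨p₀, hp₀⟩ := exists_min_abs_Lf h𝔷
  have hμlt : ∀ p : CoprimePair, (muf 𝔷 p).im < z.im := by
    intro p
    obtain ⟨M, hM⟩ := exists_act_eq h𝔷 p
    rw [← hM]
    exact hy M
  have hNmin : ∀ p, Nf 𝔷 p₀ ≤ Nf 𝔷 p := by
    intro p
    have h := hp₀ p
    simp only [Nf, ← Complex.sq_norm]
    exact pow_le_pow_left₀ (norm_nonneg _) h 2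
  have hμle : ∀ p, (muf 𝔷 p).im ≤ (muf 𝔷 p₀).im := by
    intro p
    rw [muf_im h𝔷 p, muf_im h𝔷 p₀]
    have h1 : 0 < Nf 𝔷 p₀ := Nf_pos h𝔷 p₀
    have h2 : Nf 𝔷 p₀ ≤ Nf 𝔷 p := hNmin p
    gcongr
  set ρ : ℝ := Real.exp (-(2 * π * (z.im - (muf 𝔷 p₀).im))) with hρ
  have hρ0 : (0:ℝ) ≤ ρ := (Real.exp_pos _).le
  have hρ1 : ρ < 1 := by
    have hlt : -(2 * π * (z.im - (muf 𝔷 p₀).im)) < 0 := by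
      nlinarith [Real.pi_pos, hμlt p₀]
    calc ρ < Real.exp 0 := Real.exp_lt_exp.mpr hlt
      _ = 1 := Real.exp_zero
  have hwnorm : ∀ p, ‖wf 𝔷 z p‖ = Real.exp (-(2 * π * (z.im - (muf 𝔷 p).im))) := by
    intro p
    rw [wf, Complex.norm_exp]
    congr 1
    simp [Complex.mul_re, Complex.mul_im, Complex.sub_re, Complex.sub_im]
  have hwle : ∀ p, ‖wf 𝔷 z p‖ ≤ ρ := by
    intro p
    rw [hwnorm p, hρ]
    apply Real.exp_le_exp.mpr
    have := hμle p
    nlinarith [Real.pi_pos]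
  have hwlt : ∀ p, ‖wf 𝔷 z p‖ < 1 := fun p => lt_of_le_of_lt (hwle p) hρ1
  have hgsum : Summable fun p : CoprimePair => ‖(Lf 𝔷 p ^ m)⁻¹‖ := summable_norm_inv_pow h𝔷 hm
  have hFsum : Summable (Function.uncurry fun (p : CoprimePair) (n : ℕ) =>
      (Lf 𝔷 p ^ m)⁻¹ * wf 𝔷 z p ^ n) := by
    rw [Function.uncurry_def]
    apply Summable.of_norm_bounded (g := fun q : CoprimePair × ℕ => ‖(Lf 𝔷 q.1 ^ m)⁻¹‖ * ρ ^ q.2)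
      (hgsum.mul_of_nonneg (summable_geometric_of_lt_one hρ0 hρ1) (fun p => norm_nonneg _)
        (fun n => pow_nonneg hρ0 n))
    intro q
    rw [norm_mul, norm_pow]
    gcongr
    exact hwle q.1
  rw [Hml]
  congr 1
  trans (∑' p : CoprimePair, (Lf 𝔷 p ^ m)⁻¹ * (1 - wf 𝔷 z p)⁻¹)
  · exact tsum_congr fun p => by simp [Lf, wf, muf]
  trans (∑' p : CoprimePair, ∑' n : ℕ, (Lf 𝔷 p ^ m)⁻¹ * wf 𝔷 z p ^ n)
  · exact tsum_congr fun p => by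
      rw [← tsum_geometric_of_norm_lt_one (hwlt p), ← tsum_mul_left]
  trans (∑' n : ℕ, ∑' p : CoprimePair, (Lf 𝔷 p ^ m)⁻¹ * wf 𝔷 z p ^ n)
  · exact (Summable.tsum_comm (f := fun (p : CoprimePair) (n : ℕ) => (Lf 𝔷 p ^ m)⁻¹ * wf 𝔷 z p ^ n) hFsum).symm
  refine tsum_congr fun n => ?_
  rw [← tsum_mul_right]
  exact tsum_congr fun p => term_key h𝔷 z p n


end

end RamanujanMero
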